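/- arXiv:2412.20736 — 2 statements merged into one kernel-verified Lean document; each statement's English description precedes it below -/
import Mathlib

section
/- Let L_u, L_e ∈ ℕ be positive, and let p_th = L_u / (L_e(L_e−1) + L_u L_e + L_u²). Then for all 0 < p < p_th with L_e p < 1, we have L_e(L_e−1)p² / (1 − L_e p) < L_u p (1−p)^{L_u − 1}. -/
/-- Core inequality of the threshold theorem for demonstrating fault-tolerance with an
error-detection code: below the threshold
`p_th = L_u / (L_e(L_e−1) + L_u L_e + L_u²)`, the (bound on the) conditional probability of
an accepted logical error in the encoded circuit is strictly smaller than the probability of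
exactly one error in the unencoded circuit. -/
theorem threshold_inequality (Lu Le : ℕ) (hLu : 0 < Lu) (hLe : 0 < Le) {p : ℝ}
    (hp0 : 0 < p)
    (hpth : p < (Lu : ℝ) / ((Le : ℝ) * ((Le : ℝ) - 1) + (Lu : ℝ) * Le + (Lu : ℝ) ^ 2))
    (hLep : (Le : ℝ) * p < 1) :
    (Le : ℝ) * ((Le : ℝ) - 1) * p ^ 2 / (1 - (Le : ℝ) * p)
      < (Lu : ℝ) * p * (1 - p) ^ (Lu - 1) := by
  have hLe1 : (1:ℝ) ≤ (Le:ℝ) := by exact_mod_cast hLe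
  have hLu1 : (1:ℝ) ≤ (Lu:ℝ) := by exact_mod_cast hLu
  have hp1 : p < 1 := lt_of_le_of_lt (le_mul_of_one_le_left hp0.le hLe1) hLep
  have hden : (0:ℝ) < 1 - (Le:ℝ) * p := by linarith
  have hD : (0:ℝ) < (Le:ℝ) * ((Le:ℝ) - 1) + (Lu:ℝ) * Le + (Lu:ℝ) ^ 2 := by nlinarith
  have hth : p * ((Le:ℝ) * ((Le:ℝ) - 1) + (Lu:ℝ) * Le + (Lu:ℝ) ^ 2) < Lu :=
    (lt_div_iff₀ hD).mp hpth
  have hcast : ((Lu - 1 : ℕ) : ℝ) = (Lu:ℝ) - 1 := by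
    push_cast [Nat.cast_sub hLu]; ring
  have hbern : 1 - ((Lu:ℝ) - 1) * p ≤ (1 - p) ^ (Lu - 1) := by
    have h := one_add_mul_le_pow (a := -p) (by linarith) (Lu - 1)
    rw [hcast, (by ring : (1:ℝ) + -p = 1 - p)] at h
    linarith [h]
  rw [div_lt_iff₀ hden]
  have h1 : (Lu:ℝ) * p * ((1 - ((Lu:ℝ) - 1) * p) * (1 - (Le:ℝ) * p))
      ≤ (Lu:ℝ) * p * ((1 - p) ^ (Lu - 1) * (1 - (Le:ℝ) * p)) := by
    apply mul_le_mul_of_nonneg_left _ (by positivity)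
    exact mul_le_mul_of_nonneg_right hbern hden.le
  nlinarith [h1, hth, mul_pos hp0 hp0,
    mul_nonneg (mul_nonneg hp0.le hp0.le) hp0.le,
    mul_nonneg (mul_nonneg (mul_nonneg (by linarith : (0:ℝ) ≤ (Lu:ℝ)-1) (by linarith : (0:ℝ) ≤ (Le:ℝ))) (mul_nonneg hp0.le hp0.le)) hp0.le,
    mul_nonneg (by linarith : (0:ℝ) ≤ (Lu:ℝ)) (mul_nonneg hp0.le hp0.le)]
end

section
/- Define the binary entropy h(p) = −p log₂ p − (1−p) log₂(1−p) for p ∈ [0,1] (with 0 log 0 = 0). For d ≥ 2 an integer, define the Holevo capacity of the depolarizing-type channel family C_H(p) = log₂ d + (1 − pd/(d+1)) log₂(1 − pd/(d+1)) + (pd/(d+1)) log₂(dp/(d²−1)) and the entanglement-assisted capacity C_ea(p) = log₂ d² + (1−p) log₂(1−p) + p log₂(p/(d²−1)), for p ∈ (0,1). Then lim_{p → (d²−1)/d²} C_ea(p)/C_H(p) = d+1. -/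
open Real Filter Set Topology

noncomputable def capA (D p : ℝ) : ℝ :=
  Real.log (D^2) + (1-p) * Real.log (1-p) + p * (Real.log p - Real.log (D^2-1))

noncomputable def capB (D p : ℝ) : ℝ :=
  Real.log D + (1 - p*D/(D+1)) * Real.log (1 - p*D/(D+1))
    + (p*D/(D+1)) * (Real.log p + Real.log D - Real.log (D^2-1))

noncomputable def capA1 (D p : ℝ) : ℝ :=
  (Real.log p - Real.log (D^2-1)) - Real.log (1-p)

noncomputable def capB1 (D p : ℝ) : ℝ :=
  D/(D+1) * ((Real.log p + Real.log D - Real.log (D^2-1)) - Real.log (1 - p*D/(D+1)))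

noncomputable def capA2 (D p : ℝ) : ℝ := 1/p + 1/(1-p)

noncomputable def capB2 (D p : ℝ) : ℝ :=
  D/(D+1) * (1/p + (D/(D+1)) / (1 - p*D/(D+1)))

lemma hasDerivAt_capA (D p : ℝ) (hp0 : 0 < p) (hp1 : p < 1) :
    HasDerivAt (capA D) (capA1 D p) p := by
  have h1p : 0 < 1 - p := by linarith
  have h1 : HasDerivAt (fun p : ℝ => 1 - p) (-1) p := (hasDerivAt_id p).const_sub 1
  have hlog1p : HasDerivAt (fun p : ℝ => Real.log (1-p)) ((1-p)⁻¹ * (-1)) p :=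
    (Real.hasDerivAt_log h1p.ne').comp p h1
  have ht2 : HasDerivAt (fun p : ℝ => (1-p) * Real.log (1-p))
      ((-1) * Real.log (1-p) + (1-p) * ((1-p)⁻¹ * (-1))) p := h1.mul hlog1p
  have hlogp : HasDerivAt (fun p : ℝ => Real.log p - Real.log (D^2-1)) p⁻¹ p :=
    (Real.hasDerivAt_log hp0.ne').sub_const _
  have ht3 : HasDerivAt (fun p : ℝ => p * (Real.log p - Real.log (D^2-1)))
      (1 * (Real.log p - Real.log (D^2-1)) + p * p⁻¹) p := (hasDerivAt_id p).mul hlogp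
  have h := (ht2.const_add (Real.log (D^2))).add ht3
  refine h.congr_deriv ?_
  symm
  simp only [capA1]
  field_simp
  ring

lemma hasDerivAt_capA1 (D p : ℝ) (hp0 : 0 < p) (hp1 : p < 1) :
    HasDerivAt (capA1 D) (capA2 D p) p := by
  have h1p : 0 < 1 - p := by linarith
  have h1 : HasDerivAt (fun p : ℝ => 1 - p) (-1) p := (hasDerivAt_id p).const_sub 1
  have hlog1p : HasDerivAt (fun p : ℝ => Real.log (1-p)) ((1-p)⁻¹ * (-1)) p :=
    (Real.hasDerivAt_log h1p.ne').comp p h1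
  have hlogp : HasDerivAt (fun p : ℝ => Real.log p - Real.log (D^2-1)) p⁻¹ p :=
    (Real.hasDerivAt_log hp0.ne').sub_const _
  have h := hlogp.sub hlog1p
  refine h.congr_deriv ?_
  symm
  simp only [capA2]
  field_simp
  ring

lemma hasDerivAt_capB (D p : ℝ) (hD0 : 0 < D) (hp0 : 0 < p) (hp1 : p < 1) :
    HasDerivAt (capB D) (capB1 D p) p := by
  have hDp1 : 0 < D + 1 := by linarith
  have hx : 0 < 1 - p*D/(D+1) := by
    rw [sub_pos, div_lt_one hDp1]; nlinarith
  have hxf : HasDerivAt (fun p : ℝ => 1 - p*D/(D+1)) (-(1*D/(D+1))) p :=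
    (((hasDerivAt_id p).mul_const D).div_const (D+1)).const_sub 1
  have hxf2 : HasDerivAt (fun p : ℝ => p*D/(D+1)) (1*D/(D+1)) p :=
    ((hasDerivAt_id p).mul_const D).div_const (D+1)
  have hlogx : HasDerivAt (fun p : ℝ => Real.log (1 - p*D/(D+1)))
      ((1 - p*D/(D+1))⁻¹ * -(1*D/(D+1))) p := by
      have := (Real.hasDerivAt_log hx.ne').comp p hxf; exact this
  have ht2 : HasDerivAt (fun p : ℝ => (1 - p*D/(D+1)) * Real.log (1 - p*D/(D+1)))
      (-(1*D/(D+1)) * Real.log (1 - p*D/(D+1))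
        + (1 - p*D/(D+1)) * ((1 - p*D/(D+1))⁻¹ * -(1*D/(D+1)))) p := hxf.mul hlogx
  have hlg : HasDerivAt (fun p : ℝ => Real.log p + Real.log D - Real.log (D^2-1)) p⁻¹ p :=
    ((Real.hasDerivAt_log hp0.ne').add_const _).sub_const _
  have ht3 : HasDerivAt (fun p : ℝ => (p*D/(D+1)) * (Real.log p + Real.log D - Real.log (D^2-1)))
      (1*D/(D+1) * (Real.log p + Real.log D - Real.log (D^2-1)) + (p*D/(D+1)) * p⁻¹) p :=
    hxf2.mul hlg
  have e1 : (1 - p*D/(D+1)) * ((1 - p*D/(D+1))⁻¹ * -(1*D/(D+1))) = -(1*D/(D+1)) := by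
    rw [← mul_assoc, mul_inv_cancel₀ hx.ne', one_mul]
  have e2 : p * D/(D+1) * p⁻¹ = D/(D+1) := by
    field_simp
  rw [e1] at ht2
  rw [e2] at ht3
  have h := (ht2.const_add (Real.log D)).add ht3
  refine h.congr_deriv ?_
  symm
  simp only [capB1]
  ring

lemma hasDerivAt_capB1 (D p : ℝ) (hD0 : 0 < D) (hp0 : 0 < p) (hp1 : p < 1) :
    HasDerivAt (capB1 D) (capB2 D p) p := by
  have hDp1 : 0 < D + 1 := by linarith
  have hx : 0 < 1 - p*D/(D+1) := by
    rw [sub_pos, div_lt_one hDp1]; nlinarith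
  have hxf : HasDerivAt (fun p : ℝ => 1 - p*D/(D+1)) (-(1*D/(D+1))) p :=
    (((hasDerivAt_id p).mul_const D).div_const (D+1)).const_sub 1
  have hlogx : HasDerivAt (fun p : ℝ => Real.log (1 - p*D/(D+1)))
      ((1 - p*D/(D+1))⁻¹ * -(1*D/(D+1))) p := by
      have := (Real.hasDerivAt_log hx.ne').comp p hxf; exact this
  have hlg : HasDerivAt (fun p : ℝ => Real.log p + Real.log D - Real.log (D^2-1)) p⁻¹ p :=
    ((Real.hasDerivAt_log hp0.ne').add_const _).sub_const _
  have h := (hlg.sub hlogx).const_mul (D/(D+1))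
  refine h.congr_deriv ?_
  symm
  simp only [capB2]
  ring

lemma capA_eq (D p : ℝ) (hp0 : 0 < p) (hc : 0 < D^2 - 1) :
    capA D p = (Real.logb 2 (D^2) + (1-p) * Real.logb 2 (1-p)
      + p * Real.logb 2 (p/(D^2-1))) * Real.log 2 := by
  have h2 : Real.log 2 ≠ 0 := (Real.log_pos (by norm_num)).ne'
  simp only [capA, Real.logb, Real.log_div hp0.ne' hc.ne']
  field_simp

lemma capB_eq (D p : ℝ) (hD0 : 0 < D) (hp0 : 0 < p) (hc : 0 < D^2 - 1) :
    capB D p = (Real.logb 2 D + (1 - p*D/(D+1)) * Real.logb 2 (1 - p*D/(D+1))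
      + (p*D/(D+1)) * Real.logb 2 (D*p/(D^2-1))) * Real.log 2 := by
  have h2 : Real.log 2 ≠ 0 := (Real.log_pos (by norm_num)).ne'
  have hm : Real.log (D*p/(D^2-1)) = Real.log p + Real.log D - Real.log (D^2-1) := by
    rw [Real.log_div (by positivity) hc.ne', Real.log_mul hD0.ne' hp0.ne']
    ring
  simp only [capB, Real.logb, hm]
  field_simp

/-- Holevo capacity of the depolarizing-type channel family (base-2 logarithms). -/
noncomputable def CH (d : ℕ) (p : ℝ) : ℝ :=
  Real.logb 2 d + (1 - p * d / (d + 1)) * Real.logb 2 (1 - p * d / (d + 1))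
    + (p * d / (d + 1)) * Real.logb 2 (d * p / ((d : ℝ) ^ 2 - 1))

/-- Entanglement-assisted capacity of the depolarizing-type channel family. -/
noncomputable def Cea (d : ℕ) (p : ℝ) : ℝ :=
  Real.logb 2 ((d : ℝ) ^ 2) + (1 - p) * Real.logb 2 (1 - p)
    + p * Real.logb 2 (p / ((d : ℝ) ^ 2 - 1))

set_option maxHeartbeats 2000000 in
/-- As `p → (d²−1)/d²` (the completely depolarizing point), the ratio of the
entanglement-assisted capacity to the Holevo capacity tends to `d + 1`. -/
theorem tendsto_ratio_depolarizing (d : ℕ) (hd : 2 ≤ d) :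
    Filter.Tendsto (fun p : ℝ => Cea d p / CH d p)
      (nhdsWithin (((d : ℝ) ^ 2 - 1) / (d : ℝ) ^ 2) {((d : ℝ) ^ 2 - 1) / (d : ℝ) ^ 2}ᶜ)
      (nhds ((d : ℝ) + 1)) := by
  have hD2 : (2:ℝ) ≤ (d:ℝ) := by exact_mod_cast hd
  set D := (d:ℝ) with hDdef
  have hD0 : 0 < D := by linarith
  have hD1 : 1 < D := by linarith
  have hDp1 : 0 < D + 1 := by linarith
  have hc : 0 < D^2 - 1 := by nlinarith
  have hD20 : 0 < D^2 := by positivity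
  set p₀ : ℝ := (D^2 - 1)/D^2 with hp₀def
  have hp₀0 : 0 < p₀ := div_pos hc hD20
  have hp₀1 : p₀ < 1 := (div_lt_one hD20).mpr (by linarith)
  have hIoo : Ioo (0:ℝ) 1 ∈ 𝓝 p₀ := Ioo_mem_nhds hp₀0 hp₀1
  have hevN : ∀ᶠ p in 𝓝 p₀, p ∈ Ioo (0:ℝ) 1 := hIoo
  have hev : ∀ᶠ p in 𝓝[≠] p₀, p ∈ Ioo (0:ℝ) 1 := hevN.filter_mono nhdsWithin_le_nhds
  have hne : ∀ᶠ p in 𝓝[≠] p₀, p ≠ p₀ := eventually_mem_nhdsWithin.mono fun x hx => hx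
  -- point values
  have h1p₀ : 1 - p₀ = (D^2)⁻¹ := by rw [hp₀def]; field_simp; ring
  have hx₀ : 1 - p₀*D/(D+1) = D⁻¹ := by rw [hp₀def]; field_simp; ring
  have hlogp₀ : Real.log p₀ = Real.log (D^2-1) - 2 * Real.log D := by
    rw [hp₀def, Real.log_div hc.ne' hD20.ne', Real.log_pow]
    norm_num
  have hlog1p₀ : Real.log (1 - p₀) = -(2*Real.log D) := by
    rw [h1p₀, Real.log_inv, Real.log_pow]; norm_num
  have hlogx₀ : Real.log (1 - p₀*D/(D+1)) = -Real.log D := by rw [hx₀, Real.log_inv]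
  have hA0 : capA D p₀ = 0 := by
    have h : capA D p₀ = 2*Real.log D + (D^2)⁻¹ * (-(2*Real.log D)) + p₀ * (-(2*Real.log D)) := by
      simp only [capA]
      rw [hlog1p₀, hlogp₀, h1p₀, Real.log_pow]
      push_cast
      ring
    rw [h, hp₀def]
    field_simp
    ring
  have hB0 : capB D p₀ = 0 := by
    have h : capB D p₀ = Real.log D + D⁻¹ * (-(Real.log D)) + (p₀*D/(D+1)) * (-(Real.log D)) := by
      simp only [capB]
      rw [hlogx₀, hlogp₀, hx₀]
      ring
    rw [h, hp₀def]
    field_simp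
    ring
  have hA10 : capA1 D p₀ = 0 := by
    simp only [capA1, hlogp₀, hlog1p₀]; ring
  have hB10 : capB1 D p₀ = 0 := by
    simp only [capB1, hlogp₀, hlogx₀]; ring
  -- derivatives eventually
  have hdA : ∀ᶠ p in 𝓝[≠] p₀, HasDerivAt (capA D) (capA1 D p) p :=
    hev.mono fun p hp => hasDerivAt_capA D p hp.1 hp.2
  have hdB : ∀ᶠ p in 𝓝[≠] p₀, HasDerivAt (capB D) (capB1 D p) p :=
    hev.mono fun p hp => hasDerivAt_capB D p hD0 hp.1 hp.2
  have hdA1 : ∀ᶠ p in 𝓝[≠] p₀, HasDerivAt (capA1 D) (capA2 D p) p :=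
    hev.mono fun p hp => hasDerivAt_capA1 D p hp.1 hp.2
  have hdB1 : ∀ᶠ p in 𝓝[≠] p₀, HasDerivAt (capB1 D) (capB2 D p) p :=
    hev.mono fun p hp => hasDerivAt_capB1 D p hD0 hp.1 hp.2
  -- tendsto-to-zero facts
  have hp₀Ioo : p₀ ∈ Ioo (0:ℝ) 1 := ⟨hp₀0, hp₀1⟩
  have htA : Tendsto (capA D) (𝓝[≠] p₀) (𝓝 0) := by
    have h := (hasDerivAt_capA D p₀ hp₀0 hp₀1).continuousAt
    have h' : Tendsto (capA D) (𝓝 p₀) (𝓝 (capA D p₀)) := h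
    rw [hA0] at h'
    exact h'.mono_left nhdsWithin_le_nhds
  have htB : Tendsto (capB D) (𝓝[≠] p₀) (𝓝 0) := by
    have h' : Tendsto (capB D) (𝓝 p₀) (𝓝 (capB D p₀)) :=
      (hasDerivAt_capB D p₀ hD0 hp₀0 hp₀1).continuousAt
    rw [hB0] at h'
    exact h'.mono_left nhdsWithin_le_nhds
  have htA1 : Tendsto (capA1 D) (𝓝[≠] p₀) (𝓝 0) := by
    have h' : Tendsto (capA1 D) (𝓝 p₀) (𝓝 (capA1 D p₀)) :=
      (hasDerivAt_capA1 D p₀ hp₀0 hp₀1).continuousAt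
    rw [hA10] at h'
    exact h'.mono_left nhdsWithin_le_nhds
  have htB1 : Tendsto (capB1 D) (𝓝[≠] p₀) (𝓝 0) := by
    have h' : Tendsto (capB1 D) (𝓝 p₀) (𝓝 (capB1 D p₀)) :=
      (hasDerivAt_capB1 D p₀ hD0 hp₀0 hp₀1).continuousAt
    rw [hB10] at h'
    exact h'.mono_left nhdsWithin_le_nhds
  -- nonvanishing of capB2
  have hB2pos : ∀ p ∈ Ioo (0:ℝ) 1, 0 < capB2 D p := by
    intro p hp
    have hx : 0 < 1 - p*D/(D+1) := by
      rw [sub_pos, div_lt_one hDp1]; nlinarith [hp.1, hp.2]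
    have h1 : 0 < D/(D+1) := div_pos hD0 hDp1
    exact mul_pos h1 (add_pos (one_div_pos.mpr hp.1) (div_pos h1 hx))
  have hB2ne : ∀ᶠ p in 𝓝[≠] p₀, capB2 D p ≠ 0 :=
    hev.mono fun p hp => (hB2pos p hp).ne'
  -- nonvanishing of capB1 off p₀
  have hB1ne : ∀ᶠ p in 𝓝[≠] p₀, capB1 D p ≠ 0 := by
    filter_upwards [hev, hne] with p hp hpne
    have hx : 0 < 1 - p*D/(D+1) := by
      rw [sub_pos, div_lt_one hDp1]; nlinarith [hp.1, hp.2]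
    simp only [capB1]
    intro hzero
    have hDD : D/(D+1) ≠ 0 := (div_pos hD0 hDp1).ne'
    have hinner : Real.log p + Real.log D - Real.log (D^2-1)
        = Real.log (1 - p*D/(D+1)) := by
      rcases mul_eq_zero.mp hzero with h | h
      · exact absurd h hDD
      · linarith [sub_eq_zero.mp h]
    have hlhs : Real.log (p*D/(D^2-1)) = Real.log (1 - p*D/(D+1)) := by
      rw [Real.log_div (mul_pos hp.1 hD0).ne' hc.ne', Real.log_mul hp.1.ne' hD0.ne']
      linarith [hinner]
    have hargpos : p*D/(D^2-1) ∈ Ioi (0:ℝ) := by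
      exact div_pos (mul_pos hp.1 hD0) hc
    have heq : p*D/(D^2-1) = 1 - p*D/(D+1) :=
      Real.log_injOn_pos hargpos (by simpa using hx) hlhs
    apply hpne
    have h3 : p * D^2 = D^2 - 1 := by
      field_simp at heq
      nlinarith [heq]
    rw [hp₀def, eq_div_iff hD20.ne']
    linarith [h3]
  -- second-level limit
  have hx₀pos : 0 < 1 - p₀*D/(D+1) := by rw [hx₀]; exact inv_pos.mpr hD0
  have hcontA2 : ContinuousAt (capA2 D) p₀ := by
    apply ContinuousAt.add
    · exact continuousAt_const.div continuousAt_id hp₀0.ne'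
    · exact continuousAt_const.div (continuousAt_const.sub continuousAt_id) (by linarith)
  have hcontB2 : ContinuousAt (capB2 D) p₀ := by
    apply ContinuousAt.mul continuousAt_const
    apply ContinuousAt.add
    · exact continuousAt_const.div continuousAt_id hp₀0.ne'
    · refine continuousAt_const.div ?_ hx₀pos.ne'
      exact continuousAt_const.sub ((continuousAt_id.mul continuousAt_const).div_const _)
  have hval : capA2 D p₀ / capB2 D p₀ = D + 1 := by
    simp only [capA2, capB2]
    rw [hx₀, h1p₀, hp₀def]
    field_simp
    ring
  have hdiv2 : Tendsto (fun p => capA2 D p / capB2 D p) (𝓝[≠] p₀) (𝓝 (D+1)) := by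
    have h' : Tendsto (fun p => capA2 D p / capB2 D p) (𝓝 p₀)
        (𝓝 (capA2 D p₀ / capB2 D p₀)) := hcontA2.div hcontB2 (hB2pos p₀ hp₀Ioo).ne'
    rw [hval] at h'
    exact h'.mono_left nhdsWithin_le_nhds
  have hT1 : Tendsto (fun p => capA1 D p / capB1 D p) (𝓝[≠] p₀) (𝓝 (D+1)) :=
    HasDerivAt.lhopital_zero_nhdsNE hdA1 hdB1 hB2ne htA1 htB1 hdiv2
  have hT0 : Tendsto (fun p => capA D p / capB D p) (𝓝[≠] p₀) (𝓝 (D+1)) :=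
    HasDerivAt.lhopital_zero_nhdsNE hdA hdB hB1ne htA htB hT1
  refine hT0.congr' ?_
  filter_upwards [hev] with p hp
  have h2 : Real.log 2 ≠ 0 := (Real.log_pos (by norm_num)).ne'
  have hA : capA D p = Cea d p * Real.log 2 := capA_eq D p hp.1 hc
  have hB : capB D p = CH d p * Real.log 2 := capB_eq D p hD0 hp.1 hc
  rw [hA, hB, mul_div_mul_right _ _ h2]
end
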